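/- Let (U,V) be a complete hereditary cotorsion pair in Mod-A that is weakly right periodic, and let V be a module in V of finite U-projective dimension. Then the injective dimension of V satisfies id_A V ≤ max{relspli(U), relFPD(U)}. -/

import Mathlib

universe u

open CategoryTheory Limits

namespace OSG

variable (A : Type u) [Ring A]

/-- `Ext¹_A(M,N) = 0`: every short exact sequence `0 → N → E → M → 0` splits. -/
def Ext1Zero (M N : ModuleCat.{u} A) : Prop :=
  ∀ (E : ModuleCat.{u} A) (i : N ⟶ E) (p : E ⟶ M),
    Function.Injective i → Function.Surjective p →
      LinearMap.range i.hom = LinearMap.ker p.hom → ∃ r : E ⟶ N, i ≫ r = 𝟙 N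

/-- `Ext^{n+1}_A(M,N) = 0`, expressed by dimension shifting along projective resolutions. -/
def ExtZeroSucc (n : ℕ) (M N : ModuleCat.{u} A) : Prop :=
  ∀ P : ProjectiveResolution M, Ext1Zero A (cokernel (P.complex.d (n + 1) n)) N

def IsCotorsionPair (U V : Set (ModuleCat.{u} A)) : Prop :=
  U = {M | ∀ N ∈ V, Ext1Zero A M N} ∧ V = {N | ∀ M ∈ U, Ext1Zero A M N}

/-- Every module has a special `U`-precover and a special `V`-preenvelope. -/
def IsCompletePair (U V : Set (ModuleCat.{u} A)) : Prop :=
  (∀ M : ModuleCat.{u} A, ∃ (K U₀ : ModuleCat.{u} A) (j : K ⟶ U₀) (p : U₀ ⟶ M),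
      U₀ ∈ U ∧ K ∈ V ∧ Function.Injective j ∧ Function.Surjective p ∧
        LinearMap.range j.hom = LinearMap.ker p.hom) ∧
  (∀ M : ModuleCat.{u} A, ∃ (V₀ C : ModuleCat.{u} A) (ι : M ⟶ V₀) (q : V₀ ⟶ C),
      V₀ ∈ V ∧ C ∈ U ∧ Function.Injective ι ∧ Function.Surjective q ∧
        LinearMap.range ι.hom = LinearMap.ker q.hom)

def IsHereditaryPair (U V : Set (ModuleCat.{u} A)) : Prop :=
  ∀ M ∈ U, ∀ N ∈ V, ∀ n : ℕ, ExtZeroSucc A n M N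

def leftPerp (C : Set (ModuleCat.{u} A)) : Set (ModuleCat.{u} A) :=
  {M | ∀ N ∈ C, Ext1Zero A M N}

def rightPerp (C : Set (ModuleCat.{u} A)) : Set (ModuleCat.{u} A) :=
  {N | ∀ M ∈ C, Ext1Zero A M N}

def GeneratedBySet (V : Set (ModuleCat.{u} A)) : Prop :=
  ∃ S : Set (ModuleCat.{u} A), V = rightPerp A S

/-- `M` has a resolution `0 → U_n → ⋯ → U_0 → M → 0` with all `U_i ∈ U`
(i.e. `U`-projective dimension at most `n`). -/
def ResLE (U : Set (ModuleCat.{u} A)) : ℕ → ModuleCat.{u} A → Prop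
  | 0, M => M ∈ U
  | n + 1, M =>
    ResLE U n M ∨
      ∃ (K U₀ : ModuleCat.{u} A) (j : K ⟶ U₀) (p : U₀ ⟶ M),
        U₀ ∈ U ∧ Function.Injective j ∧ Function.Surjective p ∧
          LinearMap.range j.hom = LinearMap.ker p.hom ∧ ResLE U n K

/-- `M` has a coresolution `0 → M → V^0 → ⋯ → V^n → 0` with all `V^i ∈ V`
(i.e. `V`-injective dimension at most `n`). -/
def CoresLE (V : Set (ModuleCat.{u} A)) : ℕ → ModuleCat.{u} A → Prop
  | 0, M => M ∈ V
  | n + 1, M =>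
    CoresLE V n M ∨
      ∃ (V₀ C : ModuleCat.{u} A) (ι : M ⟶ V₀) (q : V₀ ⟶ C),
        V₀ ∈ V ∧ Function.Injective ι ∧ Function.Surjective q ∧
          LinearMap.range ι.hom = LinearMap.ker q.hom ∧ CoresLE V n C

/-- The `U`-projective dimension of `M`, as an extended natural number. -/
noncomputable def resDim (U : Set (ModuleCat.{u} A)) (M : ModuleCat.{u} A) : ℕ∞ :=
  sInf {c : ℕ∞ | ∃ n : ℕ, c = n ∧ ResLE A U n M}

/-- The `V`-injective dimension of `M`, as an extended natural number. -/
noncomputable def coresDim (V : Set (ModuleCat.{u} A)) (M : ModuleCat.{u} A) : ℕ∞ :=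
  sInf {c : ℕ∞ | ∃ n : ℕ, c = n ∧ CoresLE A V n M}

def prjClass : Set (ModuleCat.{u} A) := {M | Projective M}

def injClass : Set (ModuleCat.{u} A) := {M | Injective M}

section Complexes

/-- The complex `T` is acyclic (exact everywhere). -/
def Acyclic (T : ChainComplex (ModuleCat.{u} A) ℤ) : Prop := ∀ n : ℤ, T.ExactAt n

/-- The complex `Hom_A(E, T)` is acyclic. -/
def HomIntoExact (E : ModuleCat.{u} A) (T : ChainComplex (ModuleCat.{u} A) ℤ) : Prop :=
  ∀ (n : ℤ) (f : E ⟶ T.X n), f ≫ T.d n (n - 1) = 0 →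
    ∃ g : E ⟶ T.X (n + 1), g ≫ T.d (n + 1) n = f

/-- The complex `Hom_A(T, W)` is acyclic. -/
def HomFromExact (T : ChainComplex (ModuleCat.{u} A) ℤ) (W : ModuleCat.{u} A) : Prop :=
  ∀ (n : ℤ) (f : T.X n ⟶ W), T.d (n + 1) n ≫ f = 0 →
    ∃ g : T.X (n - 1) ⟶ W, T.d n (n - 1) ≫ g = f

/-- `M` is a Gorenstein injective `A`-module. -/
def GorensteinInjective (M : ModuleCat.{u} A) : Prop :=
  ∃ T : ChainComplex (ModuleCat.{u} A) ℤ,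
    (∀ n, Injective (T.X n)) ∧ Acyclic A T ∧
      (∀ E : ModuleCat.{u} A, Injective E → HomIntoExact A E T) ∧
      ∃ n : ℤ, Nonempty (M ≅ T.cycles n)

/-- `M` is a Gorenstein projective `A`-module. -/
def GorensteinProjective (M : ModuleCat.{u} A) : Prop :=
  ∃ T : ChainComplex (ModuleCat.{u} A) ℤ,
    (∀ n, Projective (T.X n)) ∧ Acyclic A T ∧
      (∀ Q : ModuleCat.{u} A, Projective Q → HomFromExact A T Q) ∧
      ∃ n : ℤ, Nonempty (M ≅ T.cycles n)

end Complexes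
section Tensor

/-- The balancing relations inside `N ⊗_ℤ M` for a right module `N` and a left module `M`. -/
def balRel (N : ModuleCat.{u} Aᵐᵒᵖ) (M : ModuleCat.{u} A) :
    Submodule ℤ (TensorProduct ℤ N M) :=
  Submodule.span ℤ
    {x | ∃ (n : N) (a : A) (m : M),
      x = (MulOpposite.op a • n) ⊗ₜ[ℤ] m - n ⊗ₜ[ℤ] (a • m)}

/-- The tensor product `N ⊗_A M` of a right `A`-module and a left `A`-module. -/
def balTensor (N : ModuleCat.{u} Aᵐᵒᵖ) (M : ModuleCat.{u} A) : Type u :=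
  TensorProduct ℤ N M ⧸ balRel A N M

noncomputable instance (N : ModuleCat.{u} Aᵐᵒᵖ) (M : ModuleCat.{u} A) :
    AddCommGroup (balTensor A N M) :=
  inferInstanceAs (AddCommGroup (TensorProduct ℤ N M ⧸ balRel A N M))

noncomputable instance (N : ModuleCat.{u} Aᵐᵒᵖ) (M : ModuleCat.{u} A) :
    Module ℤ (balTensor A N M) :=
  inferInstanceAs (Module ℤ (TensorProduct ℤ N M ⧸ balRel A N M))

/-- The map `N ⊗_A M → N ⊗_A M'` induced by `f : M → M'`. -/
noncomputable def balMap (N : ModuleCat.{u} Aᵐᵒᵖ) {M M' : ModuleCat.{u} A} (f : M ⟶ M') :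
    balTensor A N M →ₗ[ℤ] balTensor A N M' :=
  Submodule.mapQ (balRel A N M) (balRel A N M')
    (LinearMap.lTensor (R := ℤ) N f.hom.toAddMonoidHom.toIntLinearMap)
    (by
      unfold balRel
      rw [Submodule.span_le]
      rintro x ⟨n, a, m, rfl⟩
      simp only [SetLike.mem_coe, Submodule.mem_comap, map_sub, LinearMap.lTensor_tmul]
      have h : f.hom.toAddMonoidHom.toIntLinearMap (a • m) = a • f.hom.toAddMonoidHom.toIntLinearMap m :=
        f.hom.map_smul a m
      erw [Submodule.mem_comap, map_sub, LinearMap.lTensor_tmul, LinearMap.lTensor_tmul]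
      rw [h]
      exact Submodule.subset_span ⟨n, a, f.hom.toAddMonoidHom.toIntLinearMap m, rfl⟩)

/-- The map `N ⊗_A M → N' ⊗_A M` induced by `g : N → N'`. -/
noncomputable def balMapR {N N' : ModuleCat.{u} Aᵐᵒᵖ} (g : N ⟶ N') (M : ModuleCat.{u} A) :
    balTensor A N M →ₗ[ℤ] balTensor A N' M :=
  Submodule.mapQ (balRel A N M) (balRel A N' M)
    (LinearMap.rTensor (R := ℤ) M g.hom.toAddMonoidHom.toIntLinearMap)
    (by
      unfold balRel
      rw [Submodule.span_le]
      rintro x ⟨n, a, m, rfl⟩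
      simp only [SetLike.mem_coe, Submodule.mem_comap, map_sub, LinearMap.rTensor_tmul]
      have h : g.hom.toAddMonoidHom.toIntLinearMap (MulOpposite.op a • n) =
          MulOpposite.op a • g.hom.toAddMonoidHom.toIntLinearMap n :=
        g.hom.map_smul (MulOpposite.op a) n
      erw [Submodule.mem_comap, map_sub, LinearMap.rTensor_tmul, LinearMap.rTensor_tmul]
      rw [h]
      exact Submodule.subset_span ⟨g.hom.toAddMonoidHom.toIntLinearMap n, a, m, rfl⟩)

/-- A left `A`-module `M` is flat if `− ⊗_A M` preserves injections of right `A`-modules. -/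
def FlatM (M : ModuleCat.{u} A) : Prop :=
  ∀ (N N' : ModuleCat.{u} Aᵐᵒᵖ) (g : N ⟶ N'), Function.Injective g →
    Function.Injective (balMapR A g M)

def flatClass : Set (ModuleCat.{u} A) := {M | FlatM A M}

/-- `M` is cotorsion if `Ext¹_A(F,M) = 0` for every flat module `F`. -/
def cotClass : Set (ModuleCat.{u} A) := {M | ∀ F ∈ flatClass A, Ext1Zero A F M}

end Tensor
section Rest

variable (A : Type u) [Ring A]

/-- Exactness of `N ⊗_A T` at spot `n`. -/
def TensorExactAt (N : ModuleCat.{u} Aᵐᵒᵖ) (T : ChainComplex (ModuleCat.{u} A) ℤ)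
    (n : ℤ) : Prop :=
  LinearMap.range (balMap A N (T.d (n + 1) n)) = LinearMap.ker (balMap A N (T.d n (n - 1)))

/-- `M` is a Gorenstein flat `A`-module. -/
def GorensteinFlat (M : ModuleCat.{u} A) : Prop :=
  ∃ T : ChainComplex (ModuleCat.{u} A) ℤ,
    (∀ n, T.X n ∈ flatClass A) ∧ Acyclic A T ∧
      (∀ N : ModuleCat.{u} Aᵐᵒᵖ, Injective N → ∀ n : ℤ, TensorExactAt A N T n) ∧
      ∃ n : ℤ, Nonempty (M ≅ T.cycles n)

def gprjClass : Set (ModuleCat.{u} A) := {M | GorensteinProjective A M}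
def ginjClass : Set (ModuleCat.{u} A) := {M | GorensteinInjective A M}
def gflatClass : Set (ModuleCat.{u} A) := {M | GorensteinFlat A M}

/-- projective dimension -/
noncomputable def pdim (M : ModuleCat.{u} A) : ℕ∞ := resDim A (prjClass A) M
/-- injective dimension -/
noncomputable def idim (M : ModuleCat.{u} A) : ℕ∞ := coresDim A (injClass A) M
/-- flat dimension -/
noncomputable def fdim (M : ModuleCat.{u} A) : ℕ∞ := resDim A (flatClass A) M
/-- Gorenstein projective dimension -/
noncomputable def gpdim (M : ModuleCat.{u} A) : ℕ∞ := resDim A (gprjClass A) M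
/-- Gorenstein injective dimension -/
noncomputable def gidim (M : ModuleCat.{u} A) : ℕ∞ := coresDim A (ginjClass A) M
/-- Gorenstein flat dimension -/
noncomputable def gfdim (M : ModuleCat.{u} A) : ℕ∞ := resDim A (gflatClass A) M

noncomputable def spli : ℕ∞ := ⨆ (I : ModuleCat.{u} A) (_ : Injective I), pdim A I
noncomputable def silp : ℕ∞ := ⨆ (P : ModuleCat.{u} A) (_ : Projective P), idim A P
noncomputable def sfli : ℕ∞ := ⨆ (I : ModuleCat.{u} A) (_ : Injective I), fdim A I
noncomputable def splf : ℕ∞ := ⨆ (F : ModuleCat.{u} A) (_ : F ∈ flatClass A), pdim A F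

noncomputable def FPD : ℕ∞ := ⨆ (M : ModuleCat.{u} A) (_ : pdim A M ≠ ⊤), pdim A M
noncomputable def FID : ℕ∞ := ⨆ (M : ModuleCat.{u} A) (_ : idim A M ≠ ⊤), idim A M
noncomputable def FFD : ℕ∞ := ⨆ (M : ModuleCat.{u} A) (_ : fdim A M ≠ ⊤), fdim A M

/-- Gorenstein global dimension. -/
noncomputable def Ggldim : ℕ∞ := ⨆ (M : ModuleCat.{u} A), gpdim A M
/-- Gorenstein weak global dimension. -/
noncomputable def Gwgldim : ℕ∞ := ⨆ (M : ModuleCat.{u} A), gfdim A M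

/-- sup of `U`-projective dimensions of injective modules. -/
noncomputable def relspli (U : Set (ModuleCat.{u} A)) : ℕ∞ :=
  ⨆ (I : ModuleCat.{u} A) (_ : Injective I), resDim A U I
/-- sup of `V`-injective dimensions of projective modules. -/
noncomputable def relsilp (V : Set (ModuleCat.{u} A)) : ℕ∞ :=
  ⨆ (P : ModuleCat.{u} A) (_ : Projective P), coresDim A V P
/-- finitistic `U`-projective dimension. -/
noncomputable def relFPD (U : Set (ModuleCat.{u} A)) : ℕ∞ :=
  ⨆ (M : ModuleCat.{u} A) (_ : resDim A U M ≠ ⊤), resDim A U M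
/-- finitistic `V`-injective dimension. -/
noncomputable def relFID (V : Set (ModuleCat.{u} A)) : ℕ∞ :=
  ⨆ (M : ModuleCat.{u} A) (_ : coresDim A V M ≠ ⊤), coresDim A V M

/-- Every acyclic complex of injectives has cycles in `V`. -/
def WeaklyRightPeriodic (V : Set (ModuleCat.{u} A)) : Prop :=
  ∀ T : ChainComplex (ModuleCat.{u} A) ℤ,
    (∀ n, Injective (T.X n)) → Acyclic A T → ∀ n : ℤ, T.cycles n ∈ V

/-- Every acyclic complex of projectives has cycles in `U`. -/
def WeaklyLeftPeriodic (U : Set (ModuleCat.{u} A)) : Prop :=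
  ∀ T : ChainComplex (ModuleCat.{u} A) ℤ,
    (∀ n, Projective (T.X n)) → Acyclic A T → ∀ n : ℤ, T.cycles n ∈ U

/-- A right `U`-totally acyclic complex witnesses a right `U`-Gorenstein module. -/
def RightGorenstein (U V : Set (ModuleCat.{u} A)) : Set (ModuleCat.{u} A) :=
  {M | ∃ T : ChainComplex (ModuleCat.{u} A) ℤ,
    (∀ n, T.X n ∈ U) ∧ Acyclic A T ∧ (∀ n : ℤ, T.cycles n ∈ V) ∧
      (∀ W ∈ U ∩ V, HomFromExact A T W) ∧ Nonempty (M ≅ cokernel (T.d 1 0))}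

/-- acyclic with all cycles in `V`. -/
def VAcyclicCx (V : Set (ModuleCat.{u} A)) (W : ChainComplex (ModuleCat.{u} A) ℤ) : Prop :=
  Acyclic A W ∧ ∀ n : ℤ, W.cycles n ∈ V

/-- acyclic with all cycles in `U`. -/
def UAcyclicCx (U : Set (ModuleCat.{u} A)) (W : ChainComplex (ModuleCat.{u} A) ℤ) : Prop :=
  Acyclic A W ∧ ∀ n : ℤ, W.cycles n ∈ U

/-- A complex of modules in `U` is semi-`U` if every chain map to a `V`-acyclic
complex is null-homotopic (equivalently, `Hom(X,W)` is acyclic for `V`-acyclic `W`). -/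
def SemiU (U V : Set (ModuleCat.{u} A)) (X : ChainComplex (ModuleCat.{u} A) ℤ) : Prop :=
  (∀ n, X.X n ∈ U) ∧
    ∀ W : ChainComplex (ModuleCat.{u} A) ℤ, VAcyclicCx A V W →
      ∀ f : X ⟶ W, Nonempty (Homotopy f 0)

/-- A complex of modules in `V` is semi-`V` if every chain map from a `U`-acyclic
complex to it is null-homotopic. -/
def SemiV (U V : Set (ModuleCat.{u} A)) (Y : ChainComplex (ModuleCat.{u} A) ℤ) : Prop :=
  (∀ n, Y.X n ∈ V) ∧
    ∀ T : ChainComplex (ModuleCat.{u} A) ℤ, UAcyclicCx A U T →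
      ∀ f : T ⟶ Y, Nonempty (Homotopy f 0)

/-- `W` is isomorphic to the module `M` in the derived category. -/
def IsReplacementOf (W : ChainComplex (ModuleCat.{u} A) ℤ) (M : ModuleCat.{u} A) : Prop :=
  (∀ n : ℤ, n ≠ 0 → W.ExactAt n) ∧ Nonempty (W.homology 0 ≅ M)

/-- `RGor_U`-projective dimension of `M` is at most `n`: some semi-`U`-`V` replacement `W`
of `M` has `Coker(W_{n+1} → W_n)` right `U`-Gorenstein. -/
def RGorpdLE (U V : Set (ModuleCat.{u} A)) (n : ℕ) (M : ModuleCat.{u} A) : Prop :=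
  ∃ W : ChainComplex (ModuleCat.{u} A) ℤ,
    SemiU A U V W ∧ SemiV A U V W ∧ IsReplacementOf A W M ∧
      cokernel (W.d ((n : ℤ) + 1) (n : ℤ)) ∈ RightGorenstein A U V

/-- The `RGor_U`-projective dimension. -/
noncomputable def rgorDim (U V : Set (ModuleCat.{u} A)) (M : ModuleCat.{u} A) : ℕ∞ :=
  sInf {c : ℕ∞ | ∃ n : ℕ, c = n ∧ RGorpdLE A U V n M}

/-- The `RGor_U` relative Gorenstein global dimension. -/
noncomputable def rgorGldim (U V : Set (ModuleCat.{u} A)) : ℕ∞ :=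
  ⨆ (M : ModuleCat.{u} A), rgorDim A U V M

/-- The Gorenstein flat-cotorsion dimension. -/
noncomputable def gfcDim (M : ModuleCat.{u} A) : ℕ∞ :=
  rgorDim A (flatClass A) (cotClass A) M

/-- The Gorenstein flat-cotorsion global dimension. -/
noncomputable def Gfcgldim : ℕ∞ := rgorGldim A (flatClass A) (cotClass A)

/-- `A` is right weak coherent: products of flat left `A`-modules have finite
flat dimension. -/
def RightWeakCoherent : Prop :=
  ∀ (ι : Type u) (F : ι → ModuleCat.{u} A), (∀ i, F i ∈ flatClass A) →
    fdim A (ModuleCat.of A ((i : ι) → F i)) ≠ ⊤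

/-- `A` is left `ℵ₀`-noetherian: every left ideal is countably generated. -/
def Aleph0Noetherian : Prop :=
  ∀ I : Ideal A, ∃ s : Set A, s.Countable ∧ Ideal.span s = I

end Rest


section AuxOSG

variable {A : Type u} [Ring A]

namespace Aux

@[simp] lemma mcomp_apply {M N P : ModuleCat.{u} A} (f : M ⟶ N) (g : N ⟶ P) (x : M) :
    (f ≫ g) x = g (f x) := rfl

@[simp] lemma mid_apply {M : ModuleCat.{u} A} (x : M) : (𝟙 M : M ⟶ M) x = x := rfl

/-- Corestriction of a map along an injection whose range contains the image. -/
noncomputable def corestrict {W E T : ModuleCat.{u} A} (a : W ⟶ E) (ha : Function.Injective a)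
    (φ : T ⟶ E) (hφ : ∀ t, φ t ∈ LinearMap.range a.hom) : T ⟶ W :=
  ModuleCat.ofHom (((LinearEquiv.ofInjective (a).hom ha).symm.toLinearMap).comp
    (LinearMap.codRestrict (LinearMap.range (a).hom) (φ).hom hφ))

lemma corestrict_apply {W E T : ModuleCat.{u} A} (a : W ⟶ E) (ha : Function.Injective a)
    (φ : T ⟶ E) (hφ : ∀ t, φ t ∈ LinearMap.range a.hom) (t : T) :
    a (corestrict a ha φ hφ t) = φ t := by
  have h := LinearEquiv.apply_symm_apply (LinearEquiv.ofInjective (a).hom ha)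
    ⟨φ t, hφ t⟩
  have h2 := congrArg Subtype.val h
  rw [LinearEquiv.ofInjective_apply] at h2
  exact h2

/-- Factorization of a map through a surjection which kills its kernel. -/
noncomputable def factorThruSurj {E M T : ModuleCat.{u} A} (p : E ⟶ M)
    (hp : Function.Surjective p) (ψ : E ⟶ T) (hker : ∀ x, p x = 0 → ψ x = 0) : M ⟶ T :=
  ModuleCat.ofHom ((Submodule.liftQ (LinearMap.ker (p).hom) (ψ).hom
      (fun x hx => hker x hx)).comp
    (LinearMap.quotKerEquivOfSurjective (p).hom hp).symm.toLinearMap)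

lemma factorThruSurj_apply {E M T : ModuleCat.{u} A} (p : E ⟶ M)
    (hp : Function.Surjective p) (ψ : E ⟶ T) (hker : ∀ x, p x = 0 → ψ x = 0) (x : E) :
    factorThruSurj p hp ψ hker (p x) = ψ x := by
  have h : (LinearMap.quotKerEquivOfSurjective (p).hom hp).symm (p x)
      = Submodule.Quotient.mk x := by
    apply (LinearMap.quotKerEquivOfSurjective (p).hom hp).injective
    rw [LinearEquiv.apply_symm_apply]
    simp [LinearMap.quotKerEquivOfSurjective, LinearMap.quotKerEquivRange]
  show ((Submodule.liftQ _ _ _).comp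
      (LinearMap.quotKerEquivOfSurjective (p).hom hp).symm.toLinearMap) (p x) = ψ x
  rw [LinearMap.comp_apply, LinearEquiv.coe_coe, h]
  exact Submodule.liftQ_apply _ _ x

end Aux

end AuxOSG
section AuxOSG2

variable {A : Type u} [Ring A]

namespace Aux

/-- A bundle of hypotheses saying `0 → Y → E → M → 0` is a short exact sequence. -/
structure IsSES {Y E M : ModuleCat.{u} A} (i : Y ⟶ E) (p : E ⟶ M) : Prop where
  inj : Function.Injective i
  surj : Function.Surjective p
  ex : LinearMap.range i.hom = LinearMap.ker p.hom

lemma IsSES.comp_zero {Y E M : ModuleCat.{u} A} {i : Y ⟶ E} {p : E ⟶ M}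
    (h : IsSES i p) (y : Y) : p (i y) = 0 := by
  have : i y ∈ LinearMap.ker p.hom := h.ex ▸ LinearMap.mem_range_self _ y
  exact this

lemma section_of_retraction {Y E M : ModuleCat.{u} A} {i : Y ⟶ E} {p : E ⟶ M}
    (h : IsSES i p) (r : E ⟶ Y) (hr : i ≫ r = 𝟙 Y) : ∃ s : M ⟶ E, s ≫ p = 𝟙 M := by
  have hq : ∀ x : E, p x = 0 → (𝟙 E - r ≫ i) x = 0 := by
    intro x hx
    have : x ∈ LinearMap.range i.hom := h.ex ▸ hx
    obtain ⟨y, rfl⟩ := this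
    have : r (i y) = y := ConcreteCategory.congr_hom hr y
    show i y - i (r (i y)) = 0
    rw [this, sub_self]
  refine ⟨factorThruSurj p h.surj (𝟙 E - r ≫ i) hq, ?_⟩
  ext m
  obtain ⟨x, rfl⟩ := h.surj m
  show p (factorThruSurj p h.surj (𝟙 E - r ≫ i) hq (p x)) = p x
  rw [factorThruSurj_apply]
  show p (x - i (r x)) = p x
  rw [map_sub, h.comp_zero, sub_zero]

lemma retraction_of_section {Y E M : ModuleCat.{u} A} {i : Y ⟶ E} {p : E ⟶ M}
    (h : IsSES i p) (s : M ⟶ E) (hs : s ≫ p = 𝟙 M) : ∃ r : E ⟶ Y, i ≫ r = 𝟙 Y := by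
  have hmem : ∀ x : E, (𝟙 E - p ≫ s) x ∈ LinearMap.range i.hom := by
    intro x
    rw [h.ex]
    show p (x - s (p x)) = 0
    have : p (s (p x)) = p x := ConcreteCategory.congr_hom hs (p x)
    rw [map_sub, this, sub_self]
  refine ⟨corestrict i h.inj (𝟙 E - p ≫ s) hmem, ?_⟩
  ext y
  apply h.inj
  show i (corestrict i h.inj (𝟙 E - p ≫ s) hmem (i y)) = i y
  rw [corestrict_apply]
  show i y - s (p (i y)) = i y
  rw [h.comp_zero, map_zero, sub_zero]

lemma ext1_of_injective {I : ModuleCat.{u} A} (hI : CategoryTheory.Injective I)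
    (M : ModuleCat.{u} A) : Ext1Zero A M I := by
  intro E i p hi hp hk
  haveI : Mono i := (ModuleCat.mono_iff_injective i).2 hi
  obtain ⟨r, hr⟩ := hI.factors (𝟙 I) i
  exact ⟨r, hr⟩

lemma ext1_of_projective {P : ModuleCat.{u} A} (hP : Projective P)
    (Y : ModuleCat.{u} A) : Ext1Zero A P Y := by
  intro E i p hi hp hk
  haveI : Epi p := (ModuleCat.epi_iff_surjective p).2 hp
  haveI := hP
  exact retraction_of_section ⟨hi, hp, hk⟩ (Projective.factorThru (𝟙 P) p)
    (Projective.factorThru_comp _ _)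

/-! ### Pullbacks -/

/-- The pullback of `π : J ⟶ Q` and `f : M ⟶ Q`, as a submodule of the product. -/
def pbSub {J Q M : ModuleCat.{u} A} (π : J ⟶ Q) (f : M ⟶ Q) : Submodule A (↥J × ↥M) where
  carrier := {x | π x.1 = f x.2}
  add_mem' := by
    intro a b ha hb
    show π (a.1 + b.1) = f (a.2 + b.2)
    rw [map_add, map_add]
    exact congrArg₂ (· + ·) ha hb
  zero_mem' := by
    show π 0 = f 0
    rw [map_zero, map_zero]
  smul_mem' := by
    intro c x hx
    show π (c • x.1) = f (c • x.2)
    rw [map_smul, map_smul]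
    exact congrArg (c • ·) hx

/-- Given `Ext¹(M,Y) = 0` and a SES `0 → Y → J → Q → 0`, every map `M ⟶ Q` lifts to `J`. -/
lemma lift_of_ext1 {Y J Q M : ModuleCat.{u} A} {ι : Y ⟶ J} {π : J ⟶ Q}
    (hs : IsSES ι π) (h : Ext1Zero A M Y) (f : M ⟶ Q) : ∃ g : M ⟶ J, g ≫ π = f := by
  let Xc : Submodule A (↥J × ↥M) := pbSub π f
  let X : ModuleCat.{u} A := ModuleCat.of A Xc
  let tox : ↥X → ↥Xc := fun x => x
  let prJ : X ⟶ J := ModuleCat.ofHom ((LinearMap.fst A ↥J ↥M).comp Xc.subtype)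
  let prM : X ⟶ M := ModuleCat.ofHom ((LinearMap.snd A ↥J ↥M).comp Xc.subtype)
  let i' : Y ⟶ X := ModuleCat.ofHom (LinearMap.codRestrict Xc
    ((LinearMap.inl A ↥J ↥M).comp (ι).hom)
    (fun y => by show π (ι y) = f 0; rw [hs.comp_zero, map_zero]))
  have hses : IsSES i' prM := by
    refine ⟨?_, ?_, ?_⟩
    · intro y₁ y₂ hy
      have h1 := congrArg (fun z : ↥X => (tox z).1.1) hy
      exact hs.inj h1
    · intro m
      obtain ⟨j, hj⟩ := hs.surj (f m)
      exact ⟨(⟨(j, m), hj⟩ : ↥Xc), rfl⟩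
    · ext x
      constructor
      · rintro ⟨y, rfl⟩
        show ((0 : ↥M) = 0)
        rfl
      · intro hx
        have hx0 : (tox x).1.2 = 0 := hx
        have hπ : π ((tox x).1.1) = 0 := by
          have hmem : π ((tox x).1.1) = f ((tox x).1.2) := (tox x).2
          rw [hmem, hx0, map_zero]
        have : (tox x).1.1 ∈ LinearMap.range ι.hom := hs.ex ▸ hπ
        obtain ⟨y, hy⟩ := this
        refine ⟨y, ?_⟩
        show (⟨(ι y, 0), _⟩ : ↥Xc) = tox x
        apply Subtype.ext
        show ((ι y : ↥J), (0 : ↥M)) = (tox x).1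
        rw [hy, ← hx0]
  obtain ⟨r, hr⟩ := h X i' prM hses.inj hses.surj hses.ex
  obtain ⟨s, hsec⟩ := section_of_retraction hses r hr
  refine ⟨s ≫ prJ, ?_⟩
  ext m
  show π ((tox (s m)).1.1) = f m
  have hmem : π ((tox (s m)).1.1) = f ((tox (s m)).1.2) := (tox (s m)).2
  have h2 : (tox (s m)).1.2 = m := ConcreteCategory.congr_hom hsec m
  rw [hmem, h2]

/-- If every map `M ⟶ Q` lifts along `J ↠ Q` with `J` injective and kernel `Y`,
then `Ext¹(M,Y) = 0`. -/
lemma ext1_of_lift {Y J Q : ModuleCat.{u} A} {ι : Y ⟶ J} {π : J ⟶ Q}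
    (hJ : CategoryTheory.Injective J) (hs : IsSES ι π) (M : ModuleCat.{u} A)
    (hlift : ∀ f : M ⟶ Q, ∃ g : M ⟶ J, g ≫ π = f) : Ext1Zero A M Y := by
  intro E a p ha hp hk
  haveI : Mono a := (ModuleCat.mono_iff_injective a).2 ha
  obtain ⟨φ, hφ⟩ := hJ.factors ι a
  have hψker : ∀ x : E, p x = 0 → (φ ≫ π) x = 0 := by
    intro x hx
    have : x ∈ LinearMap.range a.hom := hk ▸ hx
    obtain ⟨y, rfl⟩ := this
    show π (φ (a y)) = 0
    have : φ (a y) = ι y := ConcreteCategory.congr_hom hφ y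
    rw [this, hs.comp_zero]
  let f : M ⟶ Q := factorThruSurj p hp (φ ≫ π) hψker
  obtain ⟨g, hg⟩ := hlift f
  have hχ : ∀ x : E, (φ - p ≫ g) x ∈ LinearMap.range ι.hom := by
    intro x
    rw [hs.ex]
    show π (φ x - g (p x)) = 0
    have h1 : π (g (p x)) = f (p x) := ConcreteCategory.congr_hom hg (p x)
    have h2 : f (p x) = π (φ x) := factorThruSurj_apply p hp (φ ≫ π) hψker x
    rw [map_sub, h1, h2, sub_self]
  refine ⟨corestrict ι hs.inj (φ - p ≫ g) hχ, ?_⟩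
  ext y
  apply hs.inj
  show ι (corestrict ι hs.inj (φ - p ≫ g) hχ (a y)) = ι y
  rw [corestrict_apply]
  show φ (a y) - g (p (a y)) = ι y
  have h3 : φ (a y) = ι y := ConcreteCategory.congr_hom hφ y
  have h4 : p (a y) = 0 := IsSES.comp_zero ⟨ha, hp, hk⟩ y
  rw [h3, h4, map_zero, sub_zero]

end Aux

end AuxOSG2
section AuxOSG3

variable {A : Type u} [Ring A]

namespace Aux

/-- Given a SES `0 → K → B → X → 0` with `Ext¹(X,W) = 0`, maps `K ⟶ W` extend to `B`. -/
lemma extend_of_ext1 {K B X W : ModuleCat.{u} A} {ι : K ⟶ B} {b : B ⟶ X} (hs : IsSES ι b)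
    (hE : Ext1Zero A X W) (h : K ⟶ W) : ∃ H : B ⟶ W, ι ≫ H = h := by
  let T : Submodule A (↥W × ↥B) :=
    LinearMap.range (LinearMap.prod (h).hom (-(ι).hom))
  let PO : ModuleCat.{u} A := ModuleCat.of A ((↥W × ↥B) ⧸ T)
  let inW : W ⟶ PO := ModuleCat.ofHom (T.mkQ.comp (LinearMap.inl A ↥W ↥B))
  let inB : B ⟶ PO := ModuleCat.ofHom (T.mkQ.comp (LinearMap.inr A ↥W ↥B))
  have hTle : T ≤ LinearMap.ker ((b).hom.comp (LinearMap.snd A ↥W ↥B)) := by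
    rintro x ⟨k, rfl⟩
    show b (-(ι k)) = 0
    rw [map_neg, hs.comp_zero, neg_zero]
  let π' : PO ⟶ X := ModuleCat.ofHom (Submodule.liftQ T ((b).hom.comp (LinearMap.snd A ↥W ↥B)) hTle)
  have hmkπ : ∀ w : ↥W, ∀ v : ↥B, π' (T.mkQ (w, v)) = b v := fun _ _ => rfl
  have hses : IsSES inW π' := by
    refine ⟨?_, ?_, ?_⟩
    · intro w₁ w₂ hw
      have : T.mkQ ((w₁, 0) - (w₂, 0)) = 0 := by
        rw [map_sub]
        exact sub_eq_zero.2 hw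
      have hmem : ((w₁ - w₂ : ↥W), (0 : ↥B)) ∈ T := by
        rw [← Submodule.Quotient.mk_eq_zero T]
        simpa using this
      obtain ⟨k, hk⟩ := hmem
      have hk2 := congrArg Prod.snd hk
      have hk1 := congrArg Prod.fst hk
      have : k = 0 := by
        apply hs.inj
        have : -(ι k) = 0 := hk2
        rw [map_zero]
        exact neg_eq_zero.1 this
      rw [this, map_zero] at hk1
      have h5 : w₁ - w₂ = 0 := hk1.symm
      exact sub_eq_zero.1 h5
    · intro x
      obtain ⟨v, rfl⟩ := hs.surj x
      exact ⟨T.mkQ (0, v), rfl⟩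
    · ext q
      constructor
      · rintro ⟨w, rfl⟩
        show b 0 = 0
        rw [map_zero]
      · intro hq
        obtain ⟨⟨w, v⟩, rfl⟩ := Submodule.Quotient.mk_surjective T q
        have hbv : b v = 0 := hq
        have : v ∈ LinearMap.range ι.hom := hs.ex ▸ hbv
        obtain ⟨k, rfl⟩ := this
        refine ⟨w + h k, ?_⟩
        show T.mkQ ((w + h k : ↥W), (0 : ↥B)) = Submodule.Quotient.mk (w, ι k)
        rw [show T.mkQ ((w + h k : ↥W), (0 : ↥B))
            = Submodule.Quotient.mk ((w + h k : ↥W), (0 : ↥B)) from rfl]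
        rw [Submodule.Quotient.eq]
        exact ⟨k, by
          apply Prod.ext
          · show h k = (w + h k) - w
            abel
          · show -(ι k) = 0 - ι k
            rw [zero_sub]⟩
  obtain ⟨r, hr⟩ := hE PO inW π' hses.inj hses.surj hses.ex
  refine ⟨inB ≫ r, ?_⟩
  ext k
  show r (T.mkQ (0, ι k)) = h k
  have : T.mkQ ((0 : ↥W), ι k) = T.mkQ ((h k : ↥W), (0 : ↥B)) := by
    rw [show T.mkQ ((0 : ↥W), ι k) = Submodule.Quotient.mk ((0 : ↥W), ι k) from rfl,
      show T.mkQ ((h k : ↥W), (0 : ↥B)) = Submodule.Quotient.mk ((h k : ↥W), (0 : ↥B)) from rfl,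
      Submodule.Quotient.eq]
    exact ⟨-k, by
      apply Prod.ext
      · show h (-k) = 0 - h k
        rw [map_neg, zero_sub]
      · show -(ι (-k)) = ι k - 0
        rw [map_neg, neg_neg, sub_zero]⟩
  rw [this]
  have : r (inW (h k)) = h k := ConcreteCategory.congr_hom hr (h k)
  exact this

/-! ### The canonical injective tower -/

/-- A canonical injective module containing `X`. -/
noncomputable def JJ (X : ModuleCat.{u} A) : ModuleCat.{u} A := Injective.under X

/-- The canonical embedding `X ↪ JJ X`. -/
noncomputable def ee (X : ModuleCat.{u} A) : X ⟶ JJ X := Injective.ι X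

/-- The canonical cosyzygy `JJ X / X`. -/
noncomputable def DD (X : ModuleCat.{u} A) : ModuleCat.{u} A :=
  ModuleCat.of A (↥(JJ X) ⧸ LinearMap.range (ee X).hom)

/-- The canonical projection `JJ X ↠ DD X`. -/
noncomputable def pp (X : ModuleCat.{u} A) : JJ X ⟶ DD X :=
  ModuleCat.ofHom (LinearMap.range (ee X).hom).mkQ

lemma JJ_injective (X : ModuleCat.{u} A) : CategoryTheory.Injective (JJ X) :=
  Injective.injective_under X

lemma sesD (X : ModuleCat.{u} A) : IsSES (ee X) (pp X) := by
  refine ⟨?_, ?_, ?_⟩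
  · have hm : Mono (Injective.ι X) := inferInstance
    rw [← ModuleCat.mono_iff_injective]
    exact hm
  · exact Submodule.mkQ_surjective _
  · exact (Submodule.ker_mkQ _).symm

/-- The iterated canonical cosyzygy. -/
noncomputable def DT (k : ℕ) (X : ModuleCat.{u} A) : ModuleCat.{u} A := DD^[k] X

lemma DT_zero (X : ModuleCat.{u} A) : DT 0 X = X := rfl

lemma DT_succ (k : ℕ) (X : ModuleCat.{u} A) : DT (k + 1) X = DT k (DD X) :=
  Function.iterate_succ_apply DD k X

lemma DT_succ' (k : ℕ) (X : ModuleCat.{u} A) : DT (k + 1) X = DD (DT k X) :=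
  Function.iterate_succ_apply' DD k X

end Aux

end AuxOSG3
section AuxOSG4

variable {A : Type u} [Ring A]

namespace Aux

lemma shiftDown {K U0 X : ModuleCat.{u} A} {ι : K ⟶ U0} {b : U0 ⟶ X} (hs : IsSES ι b)
    (Z : ModuleCat.{u} A) (hX : Ext1Zero A X (DD Z)) (hU : Ext1Zero A U0 Z) :
    Ext1Zero A K Z := by
  apply ext1_of_lift (JJ_injective Z) (sesD Z) K
  intro f
  obtain ⟨F, hF⟩ := extend_of_ext1 hs hX f
  obtain ⟨G, hG⟩ := lift_of_ext1 (sesD Z) hU F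
  exact ⟨ι ≫ G, by rw [Category.assoc, hG, hF]⟩

lemma shiftQuot {A0 B0 C0 : ModuleCat.{u} A} {a : A0 ⟶ B0} {b : B0 ⟶ C0} (hs : IsSES a b)
    (W' : ModuleCat.{u} A) (hA : Ext1Zero A A0 W') (hB : Ext1Zero A B0 (DD W')) :
    Ext1Zero A C0 (DD W') := by
  apply ext1_of_lift (JJ_injective (DD W')) (sesD (DD W')) C0
  intro f
  obtain ⟨g, hg⟩ := lift_of_ext1 (sesD (DD W')) hB (b ≫ f)
  have hmem : ∀ x : A0, (a ≫ g) x ∈ LinearMap.range (ee (DD W')).hom := by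
    intro x
    rw [(sesD (DD W')).ex]
    show pp (DD W') (g (a x)) = 0
    have h1 : pp (DD W') (g (a x)) = f (b (a x)) :=
      ConcreteCategory.congr_hom hg (a x)
    rw [h1, hs.comp_zero, map_zero]
  let h0 : A0 ⟶ DD W' := corestrict (ee (DD W')) (sesD (DD W')).inj (a ≫ g) hmem
  obtain ⟨ht, hht⟩ := lift_of_ext1 (sesD W') hA h0
  haveI : Mono a := (ModuleCat.mono_iff_injective a).2 hs.inj
  obtain ⟨Ht, hHt⟩ := (JJ_injective W').factors ht a
  let g' : B0 ⟶ JJ (DD W') := g - (Ht ≫ pp W' ≫ ee (DD W'))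
  have hkill : ∀ x : B0, b x = 0 → g' x = 0 := by
    intro x hx
    have : x ∈ LinearMap.range a.hom := hs.ex ▸ hx
    obtain ⟨y, rfl⟩ := this
    show g (a y) - ee (DD W') (pp W' (Ht (a y))) = 0
    have e1 : Ht (a y) = ht y := ConcreteCategory.congr_hom hHt y
    have e2 : pp W' (ht y) = h0 y := ConcreteCategory.congr_hom hht y
    have e3 : ee (DD W') (h0 y) = (a ≫ g) y := corestrict_apply _ _ _ hmem y
    rw [e1, e2, e3]
    show g (a y) - g (a y) = 0
    rw [sub_self]
  let gbar : C0 ⟶ JJ (DD W') := factorThruSurj b hs.surj g' hkill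
  refine ⟨gbar, ?_⟩
  ext c
  obtain ⟨x, rfl⟩ := hs.surj c
  show pp (DD W') (gbar (b x)) = f (b x)
  have e4 : gbar (b x) = g' x := factorThruSurj_apply b hs.surj g' hkill x
  rw [e4]
  show pp (DD W') (g x - ee (DD W') (pp W' (Ht x))) = f (b x)
  rw [map_sub]
  have e5 : pp (DD W') (ee (DD W') (pp W' (Ht x))) = 0 := (sesD (DD W')).comp_zero _
  have e6 : pp (DD W') (g x) = f (b x) := ConcreteCategory.congr_hom hg x
  rw [e5, e6, sub_zero]

/-- Dimension shifting criterion: if `0 → Z → P₀ → M → 0` is exact with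
`Ext¹(P₀,W) = 0`, and every map `Z ⟶ W` extends to `P₀`, then `Ext¹(M,W) = 0`. -/
lemma ext1_of_syzygy_ext {Z P0 M W : ModuleCat.{u} A} {δ : Z ⟶ P0} {π₀ : P0 ⟶ M}
    (hs : IsSES δ π₀) (hP0 : Ext1Zero A P0 W)
    (hext : ∀ h : Z ⟶ W, ∃ g : P0 ⟶ W, δ ≫ g = h) : Ext1Zero A M W := by
  intro E a p ha hp hk
  have hsesE : IsSES a p := ⟨ha, hp, hk⟩
  obtain ⟨φ, hφ⟩ := lift_of_ext1 hsesE hP0 π₀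
  have hmemh : ∀ z : Z, (δ ≫ φ) z ∈ LinearMap.range a.hom := by
    intro z
    rw [hk]
    show p (φ (δ z)) = 0
    have h1 : p (φ (δ z)) = π₀ (δ z) := ConcreteCategory.congr_hom hφ (δ z)
    rw [h1, hs.comp_zero]
  let h : Z ⟶ W := corestrict a ha (δ ≫ φ) hmemh
  obtain ⟨g, hgext⟩ := hext h
  have hψk : ∀ x : P0, π₀ x = 0 → (φ - g ≫ a) x = 0 := by
    intro x hx
    have : x ∈ LinearMap.range δ.hom := hs.ex ▸ hx
    obtain ⟨z, rfl⟩ := this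
    show φ (δ z) - a (g (δ z)) = 0
    have e1 : g (δ z) = h z := ConcreteCategory.congr_hom hgext z
    have e2 : a (h z) = (δ ≫ φ) z := corestrict_apply _ _ _ hmemh z
    rw [e1, e2]
    show φ (δ z) - φ (δ z) = 0
    rw [sub_self]
  let τ : M ⟶ E := factorThruSurj π₀ hs.surj (φ - g ≫ a) hψk
  have hτ : τ ≫ p = 𝟙 M := by
    ext m
    obtain ⟨x, rfl⟩ := hs.surj m
    show p (τ (π₀ x)) = π₀ x
    rw [factorThruSurj_apply]
    show p (φ x - a (g x)) = π₀ x
    have e1 : p (φ x) = π₀ x := ConcreteCategory.congr_hom hφ x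
    rw [map_sub, e1, hsesE.comp_zero, sub_zero]
  exact retraction_of_section hsesE τ hτ

end Aux

end AuxOSG4
section AuxOSG5

variable {A : Type u} [Ring A]

namespace Aux

/-- The canonical syzygy short exact sequence extracted from a projective resolution. -/
lemma ses_syzygy {M : ModuleCat.{u} A} (P : ProjectiveResolution M) :
    ∃ (δ : (cokernel (P.complex.d (1 + 1) 1) : ModuleCat.{u} A) ⟶ P.complex.X 0)
      (π₀ : P.complex.X 0 ⟶ M), IsSES δ π₀ := by
  let πc := cokernel.π (P.complex.d (1 + 1) 1)
  have hπc : Function.Surjective πc := by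
    have : Epi πc := inferInstance
    exact (ModuleCat.epi_iff_surjective πc).1 this
  let δ : (cokernel (P.complex.d (1 + 1) 1) : ModuleCat.{u} A) ⟶ P.complex.X 0 :=
    cokernel.desc _ (P.complex.d 1 0) (P.complex.d_comp_d _ _ _)
  have hπδ : ∀ y, δ (πc y) = P.complex.d 1 0 y := by
    intro y
    have : πc ≫ δ = P.complex.d 1 0 := cokernel.π_desc _ _ _
    exact ConcreteCategory.congr_hom this y
  let π₀ : P.complex.X 0 ⟶ M := P.π.f 0
  have hπ₀ : Function.Surjective π₀ := by
    have : Epi (P.π.f 0) := inferInstance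
    exact (ModuleCat.epi_iff_surjective (P.π.f 0)).1 this
  have hex₀ : LinearMap.range (P.complex.d 1 0).hom = LinearMap.ker (P.π.f 0).hom :=
    (ShortComplex.moduleCat_exact_iff_range_eq_ker _).1 P.exact₀
  have hex₁ := (ShortComplex.moduleCat_exact_iff _).1 (P.exact_succ 0)
  refine ⟨δ, π₀, ⟨?_, hπ₀, ?_⟩⟩
  · intro q₁ q₂ hq
    obtain ⟨y₁, rfl⟩ := hπc q₁
    obtain ⟨y₂, rfl⟩ := hπc q₂
    have hy : P.complex.d 1 0 (y₁ - y₂) = 0 := by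
      rw [map_sub]
      have e1 : δ (πc y₁) = δ (πc y₂) := hq
      rw [hπδ, hπδ] at e1
      rw [e1, sub_self]
    obtain ⟨x, hx⟩ := hex₁ (y₁ - y₂) hy
    have : πc (y₁ - y₂) = 0 := by
      rw [← hx]
      have hc : P.complex.d (1 + 1) 1 ≫ πc = 0 := cokernel.condition _
      exact ConcreteCategory.congr_hom hc x
    rw [map_sub] at this
    exact sub_eq_zero.1 this
  · ext x
    constructor
    · rintro ⟨q, rfl⟩
      obtain ⟨y, rfl⟩ := hπc q
      show π₀ (δ (πc y)) = 0
      rw [hπδ]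
      have : P.complex.d 1 0 y ∈ LinearMap.ker (P.π.f 0).hom :=
        hex₀ ▸ LinearMap.mem_range_self _ y
      exact this
    · intro hx
      have : x ∈ LinearMap.range (P.complex.d 1 0).hom := hex₀ ▸ hx
      obtain ⟨y, rfl⟩ := this
      exact ⟨πc y, hπδ y⟩

section Pair

variable {U V : Set (ModuleCat.{u} A)}

lemma ext1_U_V (hpair : IsCotorsionPair A U V) {M Y : ModuleCat.{u} A}
    (hM : M ∈ U) (hY : Y ∈ V) : Ext1Zero A M Y := by
  rw [hpair.1] at hM
  exact hM Y hY

lemma mem_U (hpair : IsCotorsionPair A U V) {M : ModuleCat.{u} A}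
    (h : ∀ Y ∈ V, Ext1Zero A M Y) : M ∈ U := by
  rw [hpair.1]
  exact h

lemma mem_V (hpair : IsCotorsionPair A U V) {Y : ModuleCat.{u} A}
    (h : ∀ M ∈ U, Ext1Zero A M Y) : Y ∈ V := by
  rw [hpair.2]
  exact h

lemma DD_mem_V (hpair : IsCotorsionPair A U V) (hhered : IsHereditaryPair A U V)
    {Y : ModuleCat.{u} A} (hY : Y ∈ V) : DD Y ∈ V := by
  apply mem_V hpair
  intro M hM
  have P : ProjectiveResolution M := HasProjectiveResolution.out.some
  obtain ⟨δ, π₀, hses⟩ := ses_syzygy P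
  have hZY : Ext1Zero A (cokernel (P.complex.d (1 + 1) 1)) Y := hhered M hM Y hY 1 P
  apply ext1_of_syzygy_ext hses (ext1_of_projective (P.projective 0) _)
  intro h
  obtain ⟨ht, hht⟩ := lift_of_ext1 (sesD Y) hZY h
  haveI : Mono δ := (ModuleCat.mono_iff_injective δ).2 hses.inj
  obtain ⟨g0, hg0⟩ := (JJ_injective Y).factors ht δ
  exact ⟨g0 ≫ pp Y, by rw [← Category.assoc, hg0, hht]⟩

lemma DT_mem_V (hpair : IsCotorsionPair A U V) (hhered : IsHereditaryPair A U V)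
    (j : ℕ) {Y : ModuleCat.{u} A} (hY : Y ∈ V) : DT j Y ∈ V := by
  induction j generalizing Y with
  | zero => exact hY
  | succ j ih =>
    rw [DT_succ]
    exact ih (DD_mem_V hpair hhered hY)

lemma EV_of_resLE (hpair : IsCotorsionPair A U V) (hhered : IsHereditaryPair A U V) :
    ∀ (t : ℕ) (X : ModuleCat.{u} A), ResLE A U t X →
      ∀ j, t ≤ j → ∀ Y ∈ V, Ext1Zero A X (DT j Y) := by
  intro t
  induction t with
  | zero =>
    intro X hX j hj Y hY
    exact ext1_U_V hpair hX (DT_mem_V hpair hhered j hY)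
  | succ t ih =>
    intro X hX j hj Y hY
    rcases hX with hX | ⟨K, U0, jm, pm, hU0, hinj, hsurj, hker, hK⟩
    · exact ih X hX j (le_trans (Nat.le_succ t) hj) Y hY
    · obtain ⟨j', rfl⟩ : ∃ j'', j = j'' + 1 := ⟨j - 1, by omega⟩
      have hj' : t ≤ j' := by omega
      rw [DT_succ']
      refine shiftQuot ⟨hinj, hsurj, hker⟩ (DT j' Y) (ih K hK j' hj' Y hY) ?_
      refine ext1_U_V hpair hU0 ?_
      rw [← DT_succ']
      exact DT_mem_V hpair hhered (j' + 1) hY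

lemma resLE_of_EV (hpair : IsCotorsionPair A U V) (hcomplete : IsCompletePair A U V)
    (hhered : IsHereditaryPair A U V) :
    ∀ (n : ℕ) (X : ModuleCat.{u} A),
      (∀ Y ∈ V, Ext1Zero A X (DT n Y)) → ResLE A U n X := by
  intro n
  induction n with
  | zero =>
    intro X h
    exact mem_U hpair (fun Y hY => h Y hY)
  | succ n ih =>
    intro X h
    obtain ⟨K, U0, jm, pm, hU0, hKV, hinj, hsurj, hker⟩ := hcomplete.1 X
    have hK : ∀ Y ∈ V, Ext1Zero A K (DT n Y) := by
      intro Y hY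
      refine shiftDown ⟨hinj, hsurj, hker⟩ (DT n Y) ?_
        (ext1_U_V hpair hU0 (DT_mem_V hpair hhered n hY))
      rw [← DT_succ']
      exact h Y hY
    exact Or.inr ⟨K, U0, jm, pm, hU0, hinj, hsurj, hker, ih K hK⟩

end Pair

lemma ResLE_mono {U : Set (ModuleCat.{u} A)} {n k : ℕ} (h : n ≤ k) {X : ModuleCat.{u} A}
    (hX : ResLE A U n X) : ResLE A U k X := by
  induction k, h using Nat.le_induction with
  | base => exact hX
  | succ k hk ih => exact Or.inl ih

lemma resDim_le_of {U : Set (ModuleCat.{u} A)} {n : ℕ} {X : ModuleCat.{u} A}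
    (h : ResLE A U n X) : resDim A U X ≤ (n : ℕ∞) :=
  sInf_le ⟨n, rfl, h⟩

lemma resLE_of_resDim_le {U : Set (ModuleCat.{u} A)} {c : ℕ} {X : ModuleCat.{u} A}
    (h : resDim A U X ≤ (c : ℕ∞)) : ResLE A U c X := by
  have hlt : resDim A U X < (c : ℕ∞) + 1 :=
    lt_of_le_of_lt h (by exact_mod_cast Nat.lt_succ_self c)
  rw [resDim, sInf_lt_iff] at hlt
  obtain ⟨a, ⟨nn, rfl, hR⟩, hlt2⟩ := hlt
  have : nn ≤ c := by
    have : ((nn : ℕ∞)) < ((c + 1 : ℕ) : ℕ∞) := by exact_mod_cast hlt2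
    exact_mod_cast Nat.lt_succ_iff.1 (by exact_mod_cast this)
  exact ResLE_mono this hR

lemma resLE_of_ne_top {U : Set (ModuleCat.{u} A)} {X : ModuleCat.{u} A}
    (h : resDim A U X ≠ ⊤) : ∃ n, ResLE A U n X := by
  have hlt : resDim A U X < ⊤ := lt_top_iff_ne_top.2 h
  rw [resDim, sInf_lt_iff] at hlt
  obtain ⟨a, ⟨nn, rfl, hR⟩, _⟩ := hlt
  exact ⟨nn, hR⟩

lemma coresLE_of_DT_inj :
    ∀ (j : ℕ) (X : ModuleCat.{u} A), CategoryTheory.Injective (DT j X) →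
      CoresLE A (injClass A) j X := by
  intro j
  induction j with
  | zero => intro X h; exact h
  | succ j ih =>
    intro X h
    rw [DT_succ] at h
    exact Or.inr ⟨JJ X, DD X, ee X, pp X, JJ_injective X, (sesD X).inj, (sesD X).surj,
      (sesD X).ex, ih (DD X) h⟩

lemma injective_of_retract {X I : ModuleCat.{u} A} (ι : X ⟶ I) (r : I ⟶ X) (hr : ι ≫ r = 𝟙 X)
    (hI : CategoryTheory.Injective I) : CategoryTheory.Injective X := by
  refine ⟨?_⟩
  intro P Q g f hf
  obtain ⟨h, hh⟩ := hI.factors (g ≫ ι) f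
  exact ⟨h ≫ r, by rw [← Category.assoc, hh, Category.assoc, hr, Category.comp_id]⟩

end Aux

end AuxOSG5
/-- Modules in `V` of finite `U`-projective dimension have injective dimension
bounded by `max{relspli(U), relFPD(U)}`. -/
theorem stmt_5 (A : Type u) [Ring A] (U V : Set (ModuleCat.{u} A))
    (hpair : IsCotorsionPair A U V) (hcomplete : IsCompletePair A U V)
    (hhered : IsHereditaryPair A U V) (hwrp : WeaklyRightPeriodic A V)
    (N : ModuleCat.{u} A) (hN : N ∈ V) (hfin : resDim A U N ≠ ⊤) :
    idim A N ≤ max (relspli A U) (relFPD A U) := by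
  by_cases htop : max (relspli A U) (relFPD A U) = ⊤
  · rw [htop]; exact le_top
  have hs : relspli A U ≠ ⊤ :=
    fun h => htop (eq_top_iff.2 (h ▸ le_max_left (relspli A U) (relFPD A U)))
  have hf : relFPD A U ≠ ⊤ :=
    fun h => htop (eq_top_iff.2 (h ▸ le_max_right (relspli A U) (relFPD A U)))
  obtain ⟨s, hs0⟩ := WithTop.ne_top_iff_exists.1 hs
  obtain ⟨f, hf0⟩ := WithTop.ne_top_iff_exists.1 hf
  have hs' : (s : ℕ∞) = relspli A U := hs0
  have hf' : (f : ℕ∞) = relFPD A U := hf0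
  set m := max s f with hm
  have hresJ : ∀ (I : ModuleCat.{u} A), CategoryTheory.Injective I → ResLE A U s I := by
    intro I hI
    apply Aux.resLE_of_resDim_le (U := U)
    rw [hs']
    exact le_iSup₂ (f := fun (I : ModuleCat.{u} A) (_ : CategoryTheory.Injective I) =>
      resDim A U I) I hI
  have chain : ∀ k : ℕ, resDim A U (Aux.DT k N) ≠ ⊤ := by
    intro k
    induction k with
    | zero => exact hfin
    | succ k ih =>
      obtain ⟨a, ha⟩ := Aux.resLE_of_ne_top ih
      have hJ : ResLE A U s (Aux.JJ (Aux.DT k N)) := hresJ _ (Aux.JJ_injective _)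
      have hEV : ∀ Y ∈ V, Ext1Zero A (Aux.DT (k + 1) N) (Aux.DT (max a s + 1) Y) := by
        intro Y hY
        rw [Aux.DT_succ' k N, Aux.DT_succ' (max a s) Y]
        refine Aux.shiftQuot (Aux.sesD (Aux.DT k N)) (Aux.DT (max a s) Y)
          (Aux.EV_of_resLE hpair hhered a _ ha (max a s) (le_max_left a s) Y hY) ?_
        rw [← Aux.DT_succ']
        exact Aux.EV_of_resLE hpair hhered s _ hJ (max a s + 1)
          (le_trans (le_max_right a s) (Nat.le_succ _)) Y hY
      have hres : ResLE A U (max a s + 1) (Aux.DT (k + 1) N) :=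
        Aux.resLE_of_EV hpair hcomplete hhered _ _ hEV
      exact ne_top_of_le_ne_top (ENat.coe_ne_top _) (Aux.resDim_le_of hres)
  have hresm : ResLE A U m (Aux.DT (m + 1) N) := by
    have h1 : resDim A U (Aux.DT (m + 1) N) ≤ (f : ℕ∞) := by
      have h2 : resDim A U (Aux.DT (m + 1) N) ≤ relFPD A U :=
        le_iSup₂ (f := fun (X : ModuleCat.{u} A) (_ : resDim A U X ≠ ⊤) =>
          resDim A U X) (Aux.DT (m + 1) N) (chain (m + 1))
      rwa [← hf'] at h2
    exact Aux.ResLE_mono (le_max_right s f) (Aux.resLE_of_resDim_le h1)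
  have hkey : Ext1Zero A (Aux.DT (m + 1) N) (Aux.DT m N) :=
    Aux.EV_of_resLE hpair hhered m _ hresm m le_rfl N hN
  have hkey' : Ext1Zero A (Aux.DD (Aux.DT m N)) (Aux.DT m N) := by
    rw [← Aux.DT_succ']
    exact hkey
  obtain ⟨r, hr⟩ := hkey' (Aux.JJ (Aux.DT m N)) (Aux.ee _) (Aux.pp _)
    (Aux.sesD _).inj (Aux.sesD _).surj (Aux.sesD _).ex
  have hinjm : CategoryTheory.Injective (Aux.DT m N) :=
    Aux.injective_of_retract (Aux.ee _) r hr (Aux.JJ_injective _)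
  have hcores : CoresLE A (injClass A) m N := Aux.coresLE_of_DT_inj m N hinjm
  have hidim : idim A N ≤ (m : ℕ∞) := sInf_le ⟨m, rfl, hcores⟩
  refine le_trans hidim ?_
  rw [← hs', ← hf']
  rcases le_total s f with h | h
  · rw [hm, max_eq_right h]; exact le_max_right _ _
  · rw [hm, max_eq_left h]; exact le_max_left _ _

end OSG
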